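/- Let R ⊆ [0,∞) be a countable set with 0 ∈ R which satisfies the 4-values condition. Then there exists a countable universal metric space U with dist(U) = R. -/

import Mathlib

/-- The set of distances realized in a metric space. -/
def distSet (X : Type*) [MetricSpace X] : Set ℝ :=
  {r : ℝ | ∃ x y : X, dist x y = r}

/-- A metric space is homogeneous if every isometry from a finite subset into the
space extends to a bijective self-isometry. -/
def IsHomogeneous (X : Type*) [MetricSpace X] : Prop :=
  ∀ F : Set X, F.Finite →
    ∀ f : F → X, (∀ x y : F, dist (f x) (f y) = dist (x : X) (y : X)) →
      ∃ g : X ≃ᵢ X, ∀ x : F, g (x : X) = f x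

/-- A metric space is universal if it is homogeneous and embeds isometrically every
finite metric space whose distances lie in its distance set. -/
def IsUniversal (X : Type*) [MetricSpace X] : Prop :=
  IsHomogeneous X ∧
    ∀ (F : Type) [MetricSpace F] [Finite F], distSet F ⊆ distSet X →
      ∃ f : F → X, ∀ a b : F, dist (f a) (f b) = dist a b

/-- An Urysohn metric space: homogeneous, separable, complete, and embedding every
separable metric space whose distances lie in its distance set. -/
def IsUrysohn (X : Type*) [MetricSpace X] : Prop :=
  IsHomogeneous X ∧ TopologicalSpace.SeparableSpace X ∧ CompleteSpace X ∧
    ∀ (N : Type) [MetricSpace N] [TopologicalSpace.SeparableSpace N],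
      distSet N ⊆ distSet X →
        ∃ f : N → X, ∀ a b : N, dist (f a) (f b) = dist a b

/-- The triple `(a, b, c)` of nonnegative reals is metric: `|a - b| ≤ c ≤ a + b`. -/
def MetricTriple (a b c : ℝ) : Prop := |a - b| ≤ c ∧ c ≤ a + b

/-- `x ⤳ (a, b, c, d)`: the triples `(x,a,b)` and `(x,c,d)` are metric and
`a ≥ max {b, c, d}`. -/
def Leads (x a b c d : ℝ) : Prop :=
  MetricTriple x a b ∧ MetricTriple x c d ∧ b ≤ a ∧ c ≤ a ∧ d ≤ a

/-- The 4-values condition. -/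
def FourValues (R : Set ℝ) : Prop :=
  ∀ a b c d, a ∈ R → b ∈ R → c ∈ R → d ∈ R →
    (∃ x ∈ R, Leads x a b c d) → ∃ y ∈ R, Leads y a d c b

/-- `0` is a limit point of `R ⊆ [0, ∞)`. -/
def ZeroLimit (R : Set ℝ) : Prop := ∀ ε > 0, ∃ r ∈ R, 0 < r ∧ r < ε

/-- `d` is a metric on the type `α`. -/
def IsMetricOn {α : Type*} (d : α → α → ℝ) : Prop :=
  (∀ x, d x x = 0) ∧ (∀ x y, d x y = d y x) ∧
    (∀ x y z, d x z ≤ d x y + d y z) ∧ ∀ x y, d x y = 0 → x = y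

/-- A restricted type function of the metric space `X`: a positive real valued function on a
finite subset of `X`, compatible with the metric, with values in the distance set of `X`. -/
def IsRestrictedType (X : Type*) [MetricSpace X] (F : Set X) (t : F → ℝ) : Prop :=
  F.Finite ∧ (∀ x, 0 < t x) ∧
    (∀ x y : F, |t x - t y| ≤ dist (x : X) (y : X) ∧ dist (x : X) (y : X) ≤ t x + t y) ∧
    ∀ x, t x ∈ distSet X

/-- A Katětov function of the metric space `X`: a positive real valued function on a finite
subset of `X` whose one-point extension `Sp(k)` is isometric to a subspace of `X`. -/
def IsKatetov (X : Type*) [MetricSpace X] (F : Set X) (k : F → ℝ) : Prop :=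
  F.Finite ∧ (∀ x, 0 < k x) ∧
    ∃ (g : F → X) (p : X),
      (∀ x y : F, dist (g x) (g y) = dist (x : X) (y : X)) ∧ ∀ x : F, dist p (g x) = k x

/-- `p` realizes the type function `t` in `X`. -/
def Realizes {X : Type*} [MetricSpace X] (F : Set X) (t : F → ℝ) (p : X) : Prop :=
  ∀ x : F, dist p (x : X) = t x

lemma mt_iff {x a b : ℝ} : MetricTriple x a b ↔ (x ≤ a + b ∧ a ≤ x + b ∧ b ≤ x + a) := by
  unfold MetricTriple
  rw [abs_sub_le_iff]
  constructor
  · rintro ⟨⟨h1, h2⟩, h3⟩; exact ⟨by linarith, by linarith, by linarith⟩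
  · rintro ⟨h1, h2, h3⟩; exact ⟨⟨by linarith, by linarith⟩, by linarith⟩

structure Setup : Type 1 where
  R : Set ℝ
  hR : R ⊆ Set.Ici 0
  h0 : (0:ℝ) ∈ R
  e : ℕ → ℝ
  he : ∀ n, e n ∈ R
  he' : ∀ r ∈ R, ∃ n, e n = r
  h4 : FourValues R

namespace Setup
variable (S : Setup)

lemma nonneg {r : ℝ} (hr : r ∈ S.R) : 0 ≤ r := S.hR hr

lemma key {x a b c d : ℝ} (hx : x ∈ S.R) (ha : a ∈ S.R) (hb : b ∈ S.R) (hc : c ∈ S.R)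
    (hd : d ∈ S.R) (h1 : x ≤ a + b ∧ a ≤ x + b ∧ b ≤ x + a)
    (h2 : x ≤ c + d ∧ c ≤ x + d ∧ d ≤ x + c) (hba : b ≤ a) (hca : c ≤ a) (hda : d ≤ a) :
    ∃ y ∈ S.R, (y ≤ a + d ∧ a ≤ y + d ∧ d ≤ y + a) ∧ (y ≤ c + b ∧ c ≤ y + b ∧ b ≤ y + c) := by
  obtain ⟨y, hy, hl1, hl2, -⟩ :=
    S.h4 a b c d ha hb hc hd ⟨x, hx, mt_iff.2 h1, mt_iff.2 h2, hba, hca, hda⟩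
  exact ⟨y, hy, mt_iff.1 hl1, mt_iff.1 hl2⟩

lemma amalg {x f0 f1 g0 g1 : ℝ} (hx : x ∈ S.R) (hf0 : f0 ∈ S.R) (hf1 : f1 ∈ S.R)
    (hg0 : g0 ∈ S.R) (hg1 : g1 ∈ S.R)
    (hf : x ≤ f0 + f1 ∧ f0 ≤ x + f1 ∧ f1 ≤ x + f0)
    (hg : x ≤ g0 + g1 ∧ g0 ≤ x + g1 ∧ g1 ≤ x + g0) :
    ∃ y ∈ S.R, |f0 - g0| ≤ y ∧ y ≤ f0 + g0 ∧ |f1 - g1| ≤ y ∧ y ≤ f1 + g1 := by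
  obtain ⟨hf1', hf2', hf3'⟩ := hf
  obtain ⟨hg1', hg2', hg3'⟩ := hg
  rcases le_total f1 f0 with h01 | h01 <;> rcases le_total g1 g0 with h23 | h23
  · rcases le_total g0 f0 with hm | hm
    · -- f0 max
      obtain ⟨y, hy, ⟨p1, p2, p3⟩, q1, q2, q3⟩ := S.key hx hf0 hf1 hg1 hg0
        ⟨by linarith, by linarith, by linarith⟩ ⟨by linarith, by linarith, by linarith⟩
        h01 (by linarith) hm
      exact ⟨y, hy, abs_sub_le_iff.2 ⟨by linarith, by linarith⟩, by linarith,
        abs_sub_le_iff.2 ⟨by linarith, by linarith⟩, by linarith⟩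
    · -- g0 max
      obtain ⟨y, hy, ⟨p1, p2, p3⟩, q1, q2, q3⟩ := S.key hx hg0 hg1 hf1 hf0
        ⟨by linarith, by linarith, by linarith⟩ ⟨by linarith, by linarith, by linarith⟩
        h23 (by linarith) hm
      exact ⟨y, hy, abs_sub_le_iff.2 ⟨by linarith, by linarith⟩, by linarith,
        abs_sub_le_iff.2 ⟨by linarith, by linarith⟩, by linarith⟩
  · rcases le_total g1 f0 with hm | hm
    · -- f0 max
      obtain ⟨y, hy, ⟨p1, p2, p3⟩, q1, q2, q3⟩ := S.key hx hf0 hf1 hg1 hg0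
        ⟨by linarith, by linarith, by linarith⟩ ⟨by linarith, by linarith, by linarith⟩
        h01 hm (by linarith)
      exact ⟨y, hy, abs_sub_le_iff.2 ⟨by linarith, by linarith⟩, by linarith,
        abs_sub_le_iff.2 ⟨by linarith, by linarith⟩, by linarith⟩
    · -- g1 max
      obtain ⟨y, hy, ⟨p1, p2, p3⟩, q1, q2, q3⟩ := S.key hx hg1 hg0 hf0 hf1
        ⟨by linarith, by linarith, by linarith⟩ ⟨by linarith, by linarith, by linarith⟩
        h23 hm (by linarith)
      exact ⟨y, hy, abs_sub_le_iff.2 ⟨by linarith, by linarith⟩, by linarith,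
        abs_sub_le_iff.2 ⟨by linarith, by linarith⟩, by linarith⟩
  · rcases le_total g0 f1 with hm | hm
    · -- f1 max
      obtain ⟨y, hy, ⟨p1, p2, p3⟩, q1, q2, q3⟩ := S.key hx hf1 hf0 hg0 hg1
        ⟨by linarith, by linarith, by linarith⟩ ⟨by linarith, by linarith, by linarith⟩
        h01 hm (by linarith)
      exact ⟨y, hy, abs_sub_le_iff.2 ⟨by linarith, by linarith⟩, by linarith,
        abs_sub_le_iff.2 ⟨by linarith, by linarith⟩, by linarith⟩
    · -- g0 max
      obtain ⟨y, hy, ⟨p1, p2, p3⟩, q1, q2, q3⟩ := S.key hx hg0 hg1 hf1 hf0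
        ⟨by linarith, by linarith, by linarith⟩ ⟨by linarith, by linarith, by linarith⟩
        h23 hm (by linarith)
      exact ⟨y, hy, abs_sub_le_iff.2 ⟨by linarith, by linarith⟩, by linarith,
        abs_sub_le_iff.2 ⟨by linarith, by linarith⟩, by linarith⟩
  · rcases le_total g1 f1 with hm | hm
    · -- f1 max
      obtain ⟨y, hy, ⟨p1, p2, p3⟩, q1, q2, q3⟩ := S.key hx hf1 hf0 hg0 hg1
        ⟨by linarith, by linarith, by linarith⟩ ⟨by linarith, by linarith, by linarith⟩
        h01 (by linarith) hm
      exact ⟨y, hy, abs_sub_le_iff.2 ⟨by linarith, by linarith⟩, by linarith,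
        abs_sub_le_iff.2 ⟨by linarith, by linarith⟩, by linarith⟩
    · -- g1 max
      obtain ⟨y, hy, ⟨p1, p2, p3⟩, q1, q2, q3⟩ := S.key hx hg1 hg0 hf0 hf1
        ⟨by linarith, by linarith, by linarith⟩ ⟨by linarith, by linarith, by linarith⟩
        h23 (by linarith) hm
      exact ⟨y, hy, abs_sub_le_iff.2 ⟨by linarith, by linarith⟩, by linarith,
        abs_sub_le_iff.2 ⟨by linarith, by linarith⟩, by linarith⟩

end Setup
namespace Setup
variable (S : Setup)

/-- The task scheduled at stage `m`. -/
def task (m : ℕ) : List ℕ := Denumerable.ofNat (List ℕ) (Nat.unpair m).2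

/-- The type function coded by a list. -/
noncomputable def t0 (L : List ℕ) : ℕ → ℝ := fun i => S.e (L.getD i 0)

/-- `t` is a valid one-point extension over the points `< n`. -/
def Ok (d : ℕ → ℕ → ℝ) (n : ℕ) (t : ℕ → ℝ) : Prop :=
  (∀ i < n, t i ∈ S.R) ∧ ∀ i < n, ∀ j < n, |t i - t j| ≤ d i j ∧ d i j ≤ t i + t j

/-- `d` is an `R`-valued pseudometric on the points `< m`. -/
def DOk (d : ℕ → ℕ → ℝ) (m : ℕ) : Prop :=
  (∀ a < m, d a a = 0) ∧ (∀ a < m, ∀ b < m, d a b = d b a) ∧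
  (∀ a < m, ∀ b < m, d a b ∈ S.R) ∧ ∀ a < m, ∀ b < m, ∀ c < m, d a c ≤ d a b + d b c

lemma ok_congr {d n} {t t' : ℕ → ℝ} (h : ∀ i < n, t i = t' i) (ht : Ok S d n t) :
    Ok S d n t' := by
  obtain ⟨h1, h2⟩ := ht
  refine ⟨fun i hi => h i hi ▸ h1 i hi, fun i hi j hj => ?_⟩
  rw [← h i hi, ← h j hj]; exact h2 i hi j hj

lemma exists_y {d m k t} (hd : DOk S d m) (hk : k < m) (ht : Ok S d k t) :
    ∃ y ∈ S.R, ∀ i < k, |t i - d i k| ≤ y ∧ y ≤ t i + d i k := by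
  rcases Nat.eq_zero_or_pos k with rfl | hk0
  · exact ⟨0, S.h0, fun i hi => absurd hi (by omega)⟩
  obtain ⟨i0, hi0, hmax⟩ := Finset.exists_max_image (Finset.range k)
    (fun i => |t i - d i k|) ⟨0, Finset.mem_range.2 hk0⟩
  obtain ⟨i1, hi1, hmin⟩ := Finset.exists_min_image (Finset.range k)
    (fun i => t i + d i k) ⟨0, Finset.mem_range.2 hk0⟩
  rw [Finset.mem_range] at hi0 hi1
  have hi0m : i0 < m := by omega
  have hi1m : i1 < m := by omega
  obtain ⟨habs, hsum⟩ := ht.2 i0 hi0 i1 hi1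
  rw [abs_sub_le_iff] at habs
  obtain ⟨y, hy, hy1, hy2, hy3, hy4⟩ := S.amalg (hd.2.2.1 i0 hi0m i1 hi1m)
    (ht.1 i0 hi0) (ht.1 i1 hi1) (hd.2.2.1 i0 hi0m k hk) (hd.2.2.1 i1 hi1m k hk)
    ⟨by linarith, by linarith, by linarith⟩
    ⟨by have := hd.2.2.2 i0 hi0m k hk i1 hi1m
        have := hd.2.1 k hk i1 hi1m; linarith,
     by have := hd.2.2.2 i0 hi0m i1 hi1m k hk; linarith,
     by have := hd.2.2.2 i1 hi1m i0 hi0m k hk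
        have := hd.2.1 i1 hi1m i0 hi0m; linarith⟩
  refine ⟨y, hy, fun i hi => ⟨le_trans (hmax i (Finset.mem_range.2 hi)) hy1, ?_⟩⟩
  have := hmin i (Finset.mem_range.2 hi)
  have h1 : y ≤ t i1 + d i1 k := by
    rw [abs_sub_le_iff] at hy3; linarith
  linarith

open Classical in
/-- The next value extending the type function `t` (defined below `k`) to `k`. -/
noncomputable def extStep (d : ℕ → ℕ → ℝ) (t : ℕ → ℝ) (k : ℕ) : ℝ :=
  if h : ∃ y ∈ S.R, ∀ i < k, |t i - d i k| ≤ y ∧ y ≤ t i + d i k then h.choose else 0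

/-- Iterated extension of a type function defined below `n0`. -/
noncomputable def extFun (d : ℕ → ℕ → ℝ) (t : ℕ → ℝ) (n0 : ℕ) : ℕ → ℕ → ℝ
  | 0 => t
  | (j+1) => Function.update (extFun d t n0 j) (n0 + j)
      (extStep S d (extFun d t n0 j) (n0 + j))

lemma extFun_stable {d t n0 j i} (hi : i < n0 + j) :
    ∀ {j'}, j ≤ j' → extFun S d t n0 j' i = extFun S d t n0 j i := by
  intro j' hj'
  induction j', hj' using Nat.le_induction with
  | base => rfl
  | succ j'' h ih =>
    rw [extFun, Function.update_of_ne (show i ≠ n0 + j'' by omega)]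
    exact ih

lemma extFun_lt {d t n0 j i} (hi : i < n0) : extFun S d t n0 j i = t i :=
  extFun_stable S (j := 0) (by omega) (Nat.zero_le _)

lemma extFun_ok {d m n0 t} (hd : DOk S d m) (ht : Ok S d n0 t) :
    ∀ j, n0 + j ≤ m → Ok S d (n0 + j) (extFun S d t n0 j) := by
  intro j
  induction j with
  | zero => intro _; exact ht
  | succ j ih =>
    intro hjm
    set k := n0 + j with hk
    have hok : Ok S d k (extFun S d t n0 j) := ih (by omega)
    have hkm : k < m := by omega
    have hex : ∃ y ∈ S.R, ∀ i < k,
        |extFun S d t n0 j i - d i k| ≤ y ∧ y ≤ extFun S d t n0 j i + d i k :=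
      S.exists_y hd hkm hok
    have hy : extStep S d (extFun S d t n0 j) k ∈ S.R ∧ ∀ i < k,
        |extFun S d t n0 j i - d i k| ≤ extStep S d (extFun S d t n0 j) k ∧
          extStep S d (extFun S d t n0 j) k ≤ extFun S d t n0 j i + d i k := by
      rw [extStep, dif_pos hex]; exact hex.choose_spec
    set y := extStep S d (extFun S d t n0 j) k
    set t' := extFun S d t n0 j
    have hupd : ∀ i < k, Function.update t' k y i = t' i := fun i hi =>
      Function.update_of_ne (by omega) _ _
    have hupdk : Function.update t' k y k = y := Function.update_self _ _ _
    have hn0j : n0 + (j + 1) = k + 1 := by omega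
    rw [hn0j, extFun]
    constructor
    · intro i hi
      rcases Nat.lt_or_ge i k with h | h
      · rw [show (Function.update (extFun S d t n0 j) (n0 + j)
          (extStep S d (extFun S d t n0 j) (n0 + j))) = Function.update t' k y from rfl,
          hupd i h]
        exact hok.1 i h
      · have : i = k := by omega
        subst this
        rw [show (Function.update (extFun S d t n0 j) (n0 + j)
          (extStep S d (extFun S d t n0 j) (n0 + j))) = Function.update t' k y from rfl, hupdk]
        exact hy.1
    · intro i hi j' hj'
      rw [show (Function.update (extFun S d t n0 j) (n0 + j)
          (extStep S d (extFun S d t n0 j) (n0 + j))) = Function.update t' k y from rfl]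
      have hdkk : d k k = 0 := hd.1 k hkm
      have hynn : 0 ≤ y := S.nonneg hy.1
      rcases Nat.lt_or_ge i k with h1 | h1 <;> rcases Nat.lt_or_ge j' k with h2 | h2
      · rw [hupd i h1, hupd j' h2]; exact hok.2 i h1 j' h2
      · have : j' = k := by omega
        subst this
        rw [hupd i h1, hupdk]
        obtain ⟨ha, hb⟩ := hy.2 i h1
        rw [abs_sub_le_iff] at ha ⊢
        exact ⟨⟨by linarith, by linarith⟩, by linarith⟩
      · have : i = k := by omega
        subst this
        rw [hupd j' h2, hupdk]
        obtain ⟨ha, hb⟩ := hy.2 j' h2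
        rw [abs_sub_le_iff] at ha ⊢
        have hcomm : d k j' = d j' k := hd.2.1 k hkm j' (by omega)
        rw [hcomm]
        exact ⟨⟨by linarith, by linarith⟩, by linarith⟩
      · have hik : i = k := by omega
        have hjk : j' = k := by omega
        subst hik; subst hjk
        rw [hupdk, hdkk]
        exact ⟨by simp, by linarith⟩

/-- Distances from the stage point after full extension. -/
noncomputable def rowOf (d : ℕ → ℕ → ℝ) (t : ℕ → ℝ) (n0 : ℕ) : ℕ → ℝ :=
  fun i => extFun S d t n0 (i + 1 - n0) i

open Classical in
/-- The distances from the new point added at stage `m`. -/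
noncomputable def row (d : ℕ → ℕ → ℝ) (m : ℕ) : ℕ → ℝ :=
  if 1 ≤ (task m).length ∧ (task m).length ≤ m ∧ Ok S d (task m).length (S.t0 (task m))
  then rowOf S d (S.t0 (task m)) (task m).length
  else fun a => d 0 a

lemma rowOf_eq_extFun {d t n0 m} (hn0 : n0 ≤ m) :
    ∀ i < m, rowOf S d t n0 i = extFun S d t n0 (m - n0) i := by
  intro i hi
  unfold rowOf
  rcases Nat.lt_or_ge i n0 with h | h
  · rw [extFun_lt S h, extFun_lt S h]
  · exact (extFun_stable S (by omega) (by omega)).symm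

lemma rowOf_eq_t0 {d t n0 i} (hi : i < n0) : rowOf S d t n0 i = t i := by
  unfold rowOf; exact extFun_lt S hi

lemma row_ok {d m} (hd : DOk S d m) : Ok S d m (row S d m) := by
  unfold row
  split_ifs with h
  · obtain ⟨h1, h2, h3⟩ := h
    have hok := S.extFun_ok hd h3 (m - (task m).length) (by omega)
    rw [show (task m).length + (m - (task m).length) = m by omega] at hok
    exact S.ok_congr (fun i hi => (S.rowOf_eq_extFun h2 i hi).symm) hok
  · constructor
    · intro i hi
      exact hd.2.2.1 0 (by omega) i hi
    · intro i hi j hj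
      show |d 0 i - d 0 j| ≤ d i j ∧ d i j ≤ d 0 i + d 0 j
      have h0m : 0 < m := by omega
      have t1 := hd.2.2.2 0 h0m i hi j hj
      have t2 := hd.2.2.2 0 h0m j hj i hi
      have t3 := hd.2.2.2 i hi 0 h0m j hj
      have c1 := hd.2.1 0 h0m i hi
      have c2 := hd.2.1 0 h0m j hj
      have c3 := hd.2.1 i hi j hj
      rw [abs_sub_le_iff]
      exact ⟨⟨by linarith, by linarith⟩, by linarith⟩

/-- The distance matrix at stage `m` (defined on points `< m`). -/
noncomputable def dmat : ℕ → ℕ → ℕ → ℝ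
  | 0 => fun _ _ => 0
  | (m+1) => fun a b =>
      if a = m then (if b = m then 0 else row S (dmat m) m b)
      else if b = m then row S (dmat m) m a else dmat m a b

lemma dmat_lt {m a b : ℕ} (ha : a < m) (hb : b < m) : dmat S (m+1) a b = dmat S m a b := by
  simp [dmat, Nat.ne_of_lt ha, Nat.ne_of_lt hb]

lemma dmat_row1 {m b : ℕ} (hb : b < m) : dmat S (m+1) m b = row S (dmat S m) m b := by
  simp [dmat, Nat.ne_of_lt hb]

lemma dmat_row2 {m a : ℕ} (ha : a < m) : dmat S (m+1) a m = row S (dmat S m) m a := by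
  simp [dmat, Nat.ne_of_lt ha]

lemma dmat_diag {m : ℕ} : dmat S (m+1) m m = 0 := by simp [dmat]

lemma dmat_ok : ∀ m, DOk S (dmat S m) m := by
  intro m
  induction m with
  | zero => exact ⟨fun a ha => absurd ha (by omega), fun a ha => absurd ha (by omega),
      fun a ha => absurd ha (by omega), fun a ha => absurd ha (by omega)⟩
  | succ m ih =>
    have hr := S.row_ok ih
    set r := row S (dmat S m) m with hrdef
    have hrnn : ∀ a < m, 0 ≤ r a := fun a ha => S.nonneg (hr.1 a ha)
    have habs : ∀ a < m, ∀ b < m, |r a - r b| ≤ dmat S m a b := fun a ha b hb => (hr.2 a ha b hb).1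
    have hsum : ∀ a < m, ∀ b < m, dmat S m a b ≤ r a + r b := fun a ha b hb => (hr.2 a ha b hb).2
    refine ⟨?_, ?_, ?_, ?_⟩
    · intro a ha
      rcases Nat.lt_or_ge a m with h | h
      · rw [dmat_lt S h h]; exact ih.1 a h
      · have : a = m := by omega
        subst this; exact dmat_diag S
    · intro a ha b hb
      rcases Nat.lt_or_ge a m with h1 | h1 <;> rcases Nat.lt_or_ge b m with h2 | h2
      · rw [dmat_lt S h1 h2, dmat_lt S h2 h1]; exact ih.2.1 a h1 b h2
      · have : b = m := by omega
        subst this; rw [dmat_row2 S h1, dmat_row1 S h1]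
      · have : a = m := by omega
        subst this; rw [dmat_row2 S h2, dmat_row1 S h2]
      · have ham : a = m := by omega
        have hbm : b = m := by omega
        subst ham; subst hbm; rfl
    · intro a ha b hb
      rcases Nat.lt_or_ge a m with h1 | h1 <;> rcases Nat.lt_or_ge b m with h2 | h2
      · rw [dmat_lt S h1 h2]; exact ih.2.2.1 a h1 b h2
      · have : b = m := by omega
        subst this; rw [dmat_row2 S h1]; exact hr.1 a h1
      · have : a = m := by omega
        subst this; rw [dmat_row1 S h2]; exact hr.1 b h2
      · have ham : a = m := by omega
        have hbm : b = m := by omega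
        subst ham; subst hbm; rw [dmat_diag S]; exact S.h0
    · intro a ha b hb c hc
      rcases Nat.lt_or_ge a m with h1 | h1 <;> rcases Nat.lt_or_ge b m with h2 | h2 <;>
        rcases Nat.lt_or_ge c m with h3 | h3
      · rw [dmat_lt S h1 h3, dmat_lt S h1 h2, dmat_lt S h2 h3]
        exact ih.2.2.2 a h1 b h2 c h3
      · rw [show c = m by omega, dmat_row2 S h1, dmat_lt S h1 h2, dmat_row2 S h2]
        have := habs a h1 b h2
        rw [abs_sub_le_iff] at this
        linarith [this.1]
      · rw [show b = m by omega, dmat_lt S h1 h3, dmat_row2 S h1, dmat_row1 S h3]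
        exact hsum a h1 c h3
      · rw [show b = m by omega, show c = m by omega, dmat_row2 S h1, dmat_diag S]
        linarith [hrnn a h1]
      · rw [show a = m by omega, dmat_row1 S h3, dmat_row1 S h2, dmat_lt S h2 h3]
        have := habs b h2 c h3
        rw [abs_sub_le_iff] at this
        linarith [this.2]
      · rw [show a = m by omega, show c = m by omega, dmat_diag S, dmat_row1 S h2,
          dmat_row2 S h2]
        linarith [hrnn b h2]
      · rw [show a = m by omega, show b = m by omega, dmat_row1 S h3, dmat_diag S]
        linarith [hrnn c h3]
      · rw [show a = m by omega, show b = m by omega, show c = m by omega, dmat_diag S]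
        norm_num

/-- The global distance function on `ℕ`. -/
noncomputable def D (a b : ℕ) : ℝ := dmat S (max a b + 1) a b

lemma dmat_stable {a b : ℕ} : ∀ {m m'}, m ≤ m' → a < m → b < m →
    dmat S m' a b = dmat S m a b := by
  intro m m' h ha hb
  induction m', h using Nat.le_induction with
  | base => rfl
  | succ m'' h ih =>
    rw [dmat_lt S (by omega) (by omega)]
    exact ih

lemma D_eq {m a b : ℕ} (ha : a < m) (hb : b < m) : D S a b = dmat S m a b := by
  unfold D
  rcases le_total m (max a b + 1) with h | h
  · exact dmat_stable S h ha hb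
  · exact (dmat_stable S h (by omega) (by omega)).symm

lemma D_self (a : ℕ) : D S a a = 0 :=
  (D_eq S (Nat.lt_succ_self a) (Nat.lt_succ_self a)).trans
    ((S.dmat_ok (a+1)).1 a (Nat.lt_succ_self a))

lemma D_comm (a b : ℕ) : D S a b = D S b a := by
  have h1 := D_eq S (m := max a b + 1) (a := a) (b := b) (by omega) (by omega)
  have h2 := D_eq S (m := max a b + 1) (a := b) (b := a) (by omega) (by omega)
  rw [h1, h2]
  exact (S.dmat_ok (max a b + 1)).2.1 a (by omega) b (by omega)

lemma D_mem (a b : ℕ) : D S a b ∈ S.R := by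
  rw [D_eq S (m := max a b + 1) (a := a) (b := b) (by omega) (by omega)]
  exact (S.dmat_ok (max a b + 1)).2.2.1 a (by omega) b (by omega)

lemma D_nonneg (a b : ℕ) : 0 ≤ D S a b := S.nonneg (S.D_mem a b)

lemma D_triangle (a b c : ℕ) : D S a c ≤ D S a b + D S b c := by
  set m := max a (max b c) + 1 with hm
  have ha : a < m := by omega
  have hb : b < m := by omega
  have hc : c < m := by omega
  rw [D_eq S ha hc, D_eq S ha hb, D_eq S hb hc]
  exact (S.dmat_ok m).2.2.2 a ha b hb c hc

lemma D_ok_nat {n : ℕ} {t : ℕ → ℝ} (h : Ok S (dmat S n) n t) : Ok S (D S) n t := by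
  refine ⟨h.1, fun i hi j hj => ?_⟩
  rw [D_eq S hi hj]
  exact h.2 i hi j hj

lemma D_ok_nat' {n m : ℕ} {t : ℕ → ℝ} (hnm : n ≤ m) (h : Ok S (D S) n t) :
    Ok S (dmat S m) n t := by
  refine ⟨h.1, fun i hi j hj => ?_⟩
  rw [← D_eq S (by omega : i < m) (by omega : j < m)]
  exact h.2 i hi j hj

lemma stage_real {m : ℕ}
    (h : 1 ≤ (task m).length ∧ (task m).length ≤ m ∧
      Ok S (dmat S m) (task m).length (S.t0 (task m))) :
    ∀ i < (task m).length, D S m i = S.t0 (task m) i := by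
  intro i hi
  have him : i < m := by omega
  rw [D_eq S (m := m + 1) (by omega) (by omega), dmat_row1 S him]
  unfold row
  rw [if_pos h]
  exact S.rowOf_eq_t0 hi

/-- The fundamental realization property over initial segments. -/
lemma realize_nat {n : ℕ} (hn : 1 ≤ n) {t : ℕ → ℝ} (ht : Ok S (D S) n t) :
    ∃ p : ℕ, ∀ i < n, D S p i = t i := by
  classical
  have hc : ∀ i, ∃ cc : ℕ, i < n → S.e cc = t i := by
    intro i
    by_cases hi : i < n
    · obtain ⟨cc, hcc⟩ := S.he' (t i) (ht.1 i hi)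
      exact ⟨cc, fun _ => hcc⟩
    · exact ⟨0, fun h => absurd h hi⟩
  choose c hcspec using hc
  set L : List ℕ := (List.range n).map c with hL
  have hLlen : L.length = n := by simp [hL]
  have hget : ∀ i < n, L.getD i 0 = c i := by
    intro i hi
    rw [hL, List.getD_eq_getElem _ _ (by simpa using hi)]
    simp
  set m := Nat.pair n (Encodable.encode L) with hm
  have htask : task m = L := by
    unfold task
    rw [hm, Nat.unpair_pair]
    exact Denumerable.ofNat_encode L
  have hnm : n ≤ m := Nat.left_le_pair n (Encodable.encode L)
  have ht0 : ∀ i < n, S.t0 L i = t i := by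
    intro i hi
    unfold t0
    rw [hget i hi, hcspec i hi]
  have hok : Ok S (dmat S m) (task m).length (S.t0 (task m)) := by
    rw [htask, hLlen]
    exact S.D_ok_nat' hnm (S.ok_congr (fun i hi => (ht0 i hi).symm) ht)
  have hreal := S.stage_real ⟨by rw [htask, hLlen]; omega, by rw [htask, hLlen]; omega, hok⟩
  refine ⟨m, fun i hi => ?_⟩
  rw [htask, hLlen] at hreal
  rw [hreal i hi]
  exact ht0 i hi

end Setup
namespace Setup
variable (S : Setup)

/-- Identify points at distance zero. -/
def rel : Setoid ℕ :=
  ⟨fun a b => D S a b = 0,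
   ⟨fun a => S.D_self a,
    fun {a b} h => by rw [D_comm] at h; exact h,
    fun {a b c} h1 h2 => le_antisymm (by calc D S a c ≤ D S a b + D S b c := S.D_triangle a b c
      _ = 0 := by rw [h1, h2]; ring) (S.D_nonneg a c)⟩⟩

/-- The underlying type of the universal space. -/
def Pt : Type := Quotient S.rel

/-- The class of `a`. -/
def cl (a : ℕ) : Pt S := Quotient.mk S.rel a

lemma cl_surjective : Function.Surjective (S.cl) := Quotient.mk''_surjective

noncomputable def qdist : Pt S → Pt S → ℝ :=
  Quotient.lift₂ (D S) (by
    intro a b a' b' ha hb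
    have ha' : D S a a' = 0 := ha
    have hb' : D S b b' = 0 := hb
    apply le_antisymm
    · calc D S a b ≤ D S a a' + D S a' b := S.D_triangle a a' b
        _ ≤ D S a a' + (D S a' b' + D S b' b) := by linarith [S.D_triangle a' b' b]
        _ = D S a' b' := by rw [ha', S.D_comm b' b, hb']; ring
    · calc D S a' b' ≤ D S a' a + D S a b' := S.D_triangle a' a b'
        _ ≤ D S a' a + (D S a b + D S b b') := by linarith [S.D_triangle a b b']
        _ = D S a b := by rw [S.D_comm a' a, ha', hb']; ring)

noncomputable instance : MetricSpace (Pt S) :=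
  { dist := qdist S
    dist_self := fun x => by
      induction x using Quotient.ind with
      | _ a => exact S.D_self a
    dist_comm := fun x y => by
      induction x using Quotient.ind with
      | _ a =>
        induction y using Quotient.ind with
        | _ b => exact S.D_comm a b
    dist_triangle := fun x y z => by
      induction x using Quotient.ind with
      | _ a =>
        induction y using Quotient.ind with
        | _ b =>
          induction z using Quotient.ind with
          | _ c => exact S.D_triangle a b c
    eq_of_dist_eq_zero := fun {x y} h => by
      induction x using Quotient.ind with
      | _ a =>
        induction y using Quotient.ind with
        | _ b => exact Quotient.sound h }

lemma dist_cl (a b : ℕ) : dist (S.cl a) (S.cl b) = D S a b := rfl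

instance : Countable (Pt S) := Quotient.countable

instance : Nonempty (Pt S) := ⟨S.cl 0⟩

/-- Valid type function on a finite set of indices. -/
def OkF (T : Finset ℕ) (t : ℕ → ℝ) : Prop :=
  (∀ i ∈ T, t i ∈ S.R) ∧ ∀ i ∈ T, ∀ j ∈ T, |t i - t j| ≤ D S i j ∧ D S i j ≤ t i + t j

lemma ext_one {T : Finset ℕ} (hT : T.Nonempty) {t : ℕ → ℝ} (ht : OkF S T t) (b : ℕ)
    (hb : b ∉ T) : ∃ t' : ℕ → ℝ, OkF S (insert b T) t' ∧ ∀ i ∈ T, t' i = t i := by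
  obtain ⟨i0, hi0, hmax⟩ := Finset.exists_max_image T (fun i => |t i - D S i b|) hT
  obtain ⟨i1, hi1, hmin⟩ := Finset.exists_min_image T (fun i => t i + D S i b) hT
  obtain ⟨habs, hsum⟩ := ht.2 i0 hi0 i1 hi1
  rw [abs_sub_le_iff] at habs
  obtain ⟨y, hy, hy1, hy2, hy3, hy4⟩ := S.amalg (S.D_mem i0 i1) (ht.1 i0 hi0) (ht.1 i1 hi1)
    (S.D_mem i0 b) (S.D_mem i1 b)
    ⟨by linarith, by linarith, by linarith⟩
    ⟨by linarith [S.D_triangle i0 b i1, S.D_comm b i1],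
     by linarith [S.D_triangle i0 i1 b],
     by linarith [S.D_triangle i1 i0 b, S.D_comm i1 i0]⟩
  have hykey : ∀ i ∈ T, |t i - D S i b| ≤ y ∧ y ≤ t i + D S i b := by
    intro i hi
    have h1 : y ≤ t i1 + D S i1 b := by rw [abs_sub_le_iff] at hy3; linarith
    exact ⟨le_trans (hmax i hi) hy1, le_trans h1 (hmin i hi)⟩
  refine ⟨Function.update t b y, ⟨?_, ?_⟩, fun i hi => Function.update_of_ne (by rintro rfl; exact hb hi) _ _⟩
  · intro i hi
    rcases Finset.mem_insert.1 hi with rfl | hi'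
    · rw [Function.update_self]; exact hy
    · rw [Function.update_of_ne (by rintro rfl; exact hb hi') _ _]; exact ht.1 i hi'
  · intro i hi j hj
    have hynn : 0 ≤ y := S.nonneg hy
    rcases Finset.mem_insert.1 hi with rfl | hi' <;> rcases Finset.mem_insert.1 hj with h' | hj'
    · rw [h', Function.update_self, S.D_self]
      exact ⟨by simp, by linarith⟩
    · rw [Function.update_self, Function.update_of_ne (by rintro rfl; exact hb hj') _ _]
      obtain ⟨ha, hc⟩ := hykey j hj'
      rw [abs_sub_le_iff] at ha ⊢
      rw [S.D_comm i j] at *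
      exact ⟨⟨by linarith, by linarith⟩, by linarith⟩
    · subst h'
      rw [Function.update_self, Function.update_of_ne (by rintro rfl; exact hb hi') _ _]
      obtain ⟨ha, hc⟩ := hykey i hi'
      rw [abs_sub_le_iff] at ha ⊢
      exact ⟨⟨by linarith, by linarith⟩, by linarith⟩
    · rw [Function.update_of_ne (by rintro rfl; exact hb hi') _ _,
        Function.update_of_ne (by rintro rfl; exact hb hj') _ _]
      exact ht.2 i hi' j hj'

lemma ext_many (A : Finset ℕ) {T : Finset ℕ} (hT : T.Nonempty) {t : ℕ → ℝ}
    (ht : OkF S T t) : ∃ t' : ℕ → ℝ, OkF S (T ∪ A) t' ∧ ∀ i ∈ T, t' i = t i := by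
  classical
  induction A using Finset.induction_on with
  | empty => exact ⟨t, by simpa using ht, fun _ _ => rfl⟩
  | insert _ _ ha ih =>
    rename_i a A'
    obtain ⟨t', ht', hagree⟩ := ih
    by_cases hmem : a ∈ T ∪ A'
    · refine ⟨t', ?_, hagree⟩
      rwa [Finset.union_insert, Finset.insert_eq_self.2 hmem]
    · obtain ⟨t'', ht'', hagree'⟩ := S.ext_one ⟨hT.choose, Finset.mem_union_left _ hT.choose_spec⟩ ht' a hmem
      refine ⟨t'', by rwa [Finset.union_insert], fun i hi => ?_⟩
      rw [hagree' i (Finset.mem_union_left _ hi), hagree i hi]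

/-- The extension property of the space `Pt S`. -/
lemma realize (G : Finset (Pt S)) (hG : G.Nonempty) (t : Pt S → ℝ)
    (h1 : ∀ g ∈ G, t g ∈ S.R)
    (h2 : ∀ g ∈ G, ∀ g' ∈ G, |t g - t g'| ≤ dist g g' ∧ dist g g' ≤ t g + t g') :
    ∃ p : Pt S, ∀ g ∈ G, dist p g = t g := by
  classical
  set T : Finset ℕ := G.image Quotient.out with hT
  have hTne : T.Nonempty := hG.image _
  have hout : ∀ g ∈ G, S.cl g.out = g := fun g _ => Quotient.out_eq g
  set t' : ℕ → ℝ := fun i => t (S.cl i) with ht'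
  have hokf : OkF S T t' := by
    constructor
    · intro i hi
      obtain ⟨g, hg, rfl⟩ := Finset.mem_image.1 hi
      rw [ht']; simp only []
      rw [hout g hg]; exact h1 g hg
    · intro i hi j hj
      obtain ⟨g, hg, rfl⟩ := Finset.mem_image.1 hi
      obtain ⟨g', hg', rfl⟩ := Finset.mem_image.1 hj
      have e : dist (S.cl g.out) (S.cl g'.out) = D S g.out g'.out := S.dist_cl _ _
      rw [hout g hg, hout g' hg'] at e
      rw [ht']; simp only []
      rw [hout g hg, hout g' hg', ← e]
      exact h2 g hg g' hg'
  set n : ℕ := T.max' hTne + 1 with hn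
  have hTsub : T ⊆ Finset.range n := by
    intro i hi
    rw [Finset.mem_range, hn]
    exact Nat.lt_succ_of_le (T.le_max' i hi)
  obtain ⟨t'', ht'', hagree⟩ := S.ext_many (Finset.range n) hTne hokf
  have hok : Ok S (D S) n t'' := by
    constructor
    · intro i hi
      exact ht''.1 i (Finset.mem_union_right _ (Finset.mem_range.2 hi))
    · intro i hi j hj
      exact ht''.2 i (Finset.mem_union_right _ (Finset.mem_range.2 hi))
        j (Finset.mem_union_right _ (Finset.mem_range.2 hj))
  obtain ⟨p, hp⟩ := S.realize_nat (by omega) hok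
  refine ⟨S.cl p, fun g hg => ?_⟩
  have hgo : g.out ∈ T := Finset.mem_image.2 ⟨g, hg, rfl⟩
  have hgn : g.out < n := Finset.mem_range.1 (hTsub hgo)
  calc dist (S.cl p) g = dist (S.cl p) (S.cl g.out) := by rw [hout g hg]
    _ = D S p g.out := rfl
    _ = t'' g.out := hp g.out hgn
    _ = t' g.out := hagree g.out hgo
    _ = t g := by rw [ht']; simp only []; rw [hout g hg]

end Setup
namespace Setup
variable (S : Setup)

lemma distSet_eq : distSet (Pt S) = S.R := by
  apply Set.Subset.antisymm
  · rintro r ⟨x, y, rfl⟩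
    obtain ⟨a, rfl⟩ := S.cl_surjective x
    obtain ⟨b, rfl⟩ := S.cl_surjective y
    rw [S.dist_cl]
    exact S.D_mem a b
  · intro r hr
    obtain ⟨p, hp⟩ := S.realize {S.cl 0} (Finset.singleton_nonempty _) (fun _ => r)
      (fun g _ => hr)
      (by
        intro g hg g' hg'
        rw [Finset.mem_singleton] at hg hg'
        subst hg; subst hg'
        rw [dist_self]
        constructor
        · simp
        · linarith [S.nonneg hr])
    exact ⟨p, S.cl 0, hp _ (Finset.mem_singleton_self _)⟩

lemma mem_R_of_dist (x y : Pt S) : dist x y ∈ S.R := by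
  rw [← S.distSet_eq]; exact ⟨x, y, rfl⟩

/-- Realize the distances to `x` through the first coordinates, on the second coordinates. -/
lemma claimA (P : List (Pt S × Pt S))
    (hP : ∀ p ∈ P, ∀ q ∈ P, dist p.1 q.1 = dist p.2 q.2) (x : Pt S) :
    ∃ p : Pt S, ∀ q ∈ P, dist p q.2 = dist x q.1 := by
  classical
  by_cases hP0 : P = []
  · subst hP0; exact ⟨x, fun q hq => absurd hq List.not_mem_nil⟩
  obtain ⟨q0, hq0⟩ := List.exists_mem_of_ne_nil P hP0
  set G : Finset (Pt S) := (P.map Prod.snd).toFinset with hG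
  have hGne : G.Nonempty := ⟨q0.2, List.mem_toFinset.2 (List.mem_map.2 ⟨q0, hq0, rfl⟩)⟩
  set t : Pt S → ℝ := fun y =>
    if h : ∃ q, q ∈ P ∧ q.2 = y then dist x h.choose.1 else 0 with htdef
  have ht : ∀ q ∈ P, t q.2 = dist x q.1 := by
    intro q hq
    have hex : ∃ q', q' ∈ P ∧ q'.2 = q.2 := ⟨q, hq, rfl⟩
    obtain ⟨hq', he'⟩ := hex.choose_spec
    have hfst : hex.choose.1 = q.1 := by
      have h1 := hP hex.choose hq' q hq
      rw [he', dist_self] at h1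
      exact dist_eq_zero.1 h1
    rw [htdef]
    simp only []
    rw [dif_pos hex, hfst]
  have h1 : ∀ g ∈ G, t g ∈ S.R := by
    intro g hg
    obtain ⟨q, hq, rfl⟩ := List.mem_map.1 (List.mem_toFinset.1 hg)
    rw [ht q hq]
    exact S.mem_R_of_dist x q.1
  have h2 : ∀ g ∈ G, ∀ g' ∈ G, |t g - t g'| ≤ dist g g' ∧ dist g g' ≤ t g + t g' := by
    intro g hg g' hg'
    obtain ⟨q, hq, rfl⟩ := List.mem_map.1 (List.mem_toFinset.1 hg)
    obtain ⟨q', hq', rfl⟩ := List.mem_map.1 (List.mem_toFinset.1 hg')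
    rw [ht q hq, ht q' hq', ← hP q hq q' hq']
    constructor
    · rw [dist_comm x q.1, dist_comm x q'.1]
      exact abs_dist_sub_le _ _ _
    · rw [dist_comm x q.1]
      exact dist_triangle _ x _
  obtain ⟨p, hp⟩ := S.realize G hGne t h1 h2
  refine ⟨p, fun q hq => ?_⟩
  rw [hp q.2 (List.mem_toFinset.2 (List.mem_map.2 ⟨q, hq, rfl⟩)), ht q hq]

lemma claimB (P : List (Pt S × Pt S))
    (hP : ∀ p ∈ P, ∀ q ∈ P, dist p.1 q.1 = dist p.2 q.2) (x : Pt S) :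
    ∃ p : Pt S, ∀ q ∈ P, dist p q.1 = dist x q.2 := by
  obtain ⟨p, hp⟩ := S.claimA (P.map Prod.swap)
    (by
      intro a ha b hb
      obtain ⟨qa, hqa, rfl⟩ := List.mem_map.1 ha
      obtain ⟨qb, hqb, rfl⟩ := List.mem_map.1 hb
      exact (hP qa hqa qb hqb).symm) x
  refine ⟨p, fun q hq => ?_⟩
  exact hp q.swap (List.mem_map.2 ⟨q, hq, rfl⟩)

open Classical in
/-- One back-and-forth step. -/
noncomputable def nxt (u : ℕ → Pt S) (P : List (Pt S × Pt S)) (n : ℕ) : Pt S × Pt S :=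
  if n % 2 = 0 then
    (u (n/2), if h : ∃ p : Pt S, ∀ q ∈ P, dist p q.2 = dist (u (n/2)) q.1
      then h.choose else u (n/2))
  else
    (if h : ∃ p : Pt S, ∀ q ∈ P, dist p q.1 = dist (u (n/2)) q.2
      then h.choose else u (n/2), u (n/2))

noncomputable def chain (u : ℕ → Pt S) (P0 : List (Pt S × Pt S)) : ℕ → List (Pt S × Pt S)
  | 0 => P0
  | (n+1) => chain u P0 n ++ [nxt S u (chain u P0 n) n]

lemma chain_inv (u : ℕ → Pt S) (P0 : List (Pt S × Pt S))
    (h0 : ∀ p ∈ P0, ∀ q ∈ P0, dist p.1 q.1 = dist p.2 q.2) :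
    ∀ n, ∀ p ∈ chain S u P0 n, ∀ q ∈ chain S u P0 n, dist p.1 q.1 = dist p.2 q.2 := by
  intro n
  induction n with
  | zero => exact h0
  | succ n ih =>
    have hstep : ∀ q ∈ chain S u P0 n,
        dist (nxt S u (chain S u P0 n) n).1 q.1 = dist (nxt S u (chain S u P0 n) n).2 q.2 := by
      intro q hq
      by_cases hpar : n % 2 = 0
      · have hex := S.claimA (chain S u P0 n) ih (u (n/2))
        rw [nxt, if_pos hpar, dif_pos hex]
        exact (hex.choose_spec q hq).symm
      · have hex := S.claimB (chain S u P0 n) ih (u (n/2))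
        rw [nxt, if_neg hpar, dif_pos hex]
        exact hex.choose_spec q hq
    intro p hp q hq
    rw [chain] at hp hq
    rcases List.mem_append.1 hp with hp' | hp' <;> rcases List.mem_append.1 hq with hq' | hq'
    · exact ih p hp' q hq'
    · rw [List.mem_singleton] at hq'
      subst hq'
      rw [dist_comm p.1 _, dist_comm p.2 _]
      exact hstep p hp'
    · rw [List.mem_singleton] at hp'
      subst hp'
      exact hstep q hq'
    · rw [List.mem_singleton] at hp' hq'
      subst hp'; subst hq'
      rw [dist_self, dist_self]

lemma chain_mono (u : ℕ → Pt S) (P0 : List (Pt S × Pt S)) {n m : ℕ} (h : n ≤ m) :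
    ∀ q ∈ chain S u P0 n, q ∈ chain S u P0 m := by
  induction m, h using Nat.le_induction with
  | base => exact fun q hq => hq
  | succ m h ih =>
    intro q hq
    rw [chain]
    exact List.mem_append.2 (Or.inl (ih q hq))

lemma chain_cover1 (u : ℕ → Pt S) (P0 : List (Pt S × Pt S)) (k : ℕ) :
    ∃ q ∈ chain S u P0 (2*k+1), q.1 = u k := by
  refine ⟨nxt S u (chain S u P0 (2*k)) (2*k), ?_, ?_⟩
  · rw [chain]
    exact List.mem_append.2 (Or.inr (List.mem_singleton.2 rfl))
  · unfold nxt
    rw [if_pos (by omega : 2*k % 2 = 0)]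
    simp only []
    congr 1
    omega

lemma chain_cover2 (u : ℕ → Pt S) (P0 : List (Pt S × Pt S)) (k : ℕ) :
    ∃ q ∈ chain S u P0 (2*k+2), q.2 = u k := by
  refine ⟨nxt S u (chain S u P0 (2*k+1)) (2*k+1), ?_, ?_⟩
  · rw [show 2*k+2 = (2*k+1)+1 by ring, chain]
    exact List.mem_append.2 (Or.inr (List.mem_singleton.2 rfl))
  · unfold nxt
    rw [if_neg (by omega : ¬ (2*k+1) % 2 = 0)]
    simp only []
    congr 1
    omega

/-- The space `Pt S` is homogeneous. -/
theorem homogeneous : IsHomogeneous (Pt S) := by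
  classical
  intro F hF f hf
  by_cases hFne : F.Nonempty
  swap
  · exact ⟨IsometryEquiv.refl _, fun x => absurd ⟨x.1, x.2⟩ hFne⟩
  obtain ⟨u, hu⟩ := exists_surjective_nat (Pt S)
  set f' : Pt S → Pt S := fun x => if h : x ∈ F then f ⟨x, h⟩ else x with hf'def
  have hf' : ∀ (x : Pt S) (h : x ∈ F), f' x = f ⟨x, h⟩ := by
    intro x h
    rw [hf'def]
    simp only []
    rw [dif_pos h]
  set lF : List (Pt S) := hF.toFinset.toList with hlF
  have hlFmem : ∀ x ∈ lF, x ∈ F := by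
    intro x hx
    rw [hlF, Finset.mem_toList, Set.Finite.mem_toFinset] at hx
    exact hx
  have hFlF : ∀ x ∈ F, x ∈ lF := by
    intro x hx
    rw [hlF, Finset.mem_toList, Set.Finite.mem_toFinset]
    exact hx
  set P0 : List (Pt S × Pt S) := lF.map (fun x => (x, f' x)) with hP0
  have hinv0 : ∀ p ∈ P0, ∀ q ∈ P0, dist p.1 q.1 = dist p.2 q.2 := by
    intro p hp q hq
    obtain ⟨a, ha, rfl⟩ := List.mem_map.1 hp
    obtain ⟨b, hb, rfl⟩ := List.mem_map.1 hq
    have haF := hlFmem a ha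
    have hbF := hlFmem b hb
    simp only []
    rw [hf' a haF, hf' b hbF]
    exact (hf ⟨a, haF⟩ ⟨b, hbF⟩).symm
  have hinv : ∀ n, ∀ p ∈ chain S u P0 n, ∀ q ∈ chain S u P0 n,
      dist p.1 q.1 = dist p.2 q.2 := S.chain_inv u P0 hinv0
  have hginv : ∀ p q : Pt S × Pt S, (∃ n, p ∈ chain S u P0 n) → (∃ m, q ∈ chain S u P0 m) →
      dist p.1 q.1 = dist p.2 q.2 := by
    rintro p q ⟨n, hn⟩ ⟨m, hm⟩
    exact hinv (max n m) p (S.chain_mono u P0 (le_max_left n m) p hn)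
      q (S.chain_mono u P0 (le_max_right n m) q hm)
  have covF : ∀ x : Pt S, ∃ pr : Pt S × Pt S, (∃ n, pr ∈ chain S u P0 n) ∧ pr.1 = x := by
    intro x
    obtain ⟨k, rfl⟩ := hu x
    obtain ⟨q, hq, hq1⟩ := S.chain_cover1 u P0 k
    exact ⟨q, ⟨2*k+1, hq⟩, hq1⟩
  choose pr hpr hpr1 using covF
  set g : Pt S → Pt S := fun x => (pr x).2 with hgdef
  have hkey : ∀ r : Pt S × Pt S, (∃ n, r ∈ chain S u P0 n) → g r.1 = r.2 := by
    intro r hr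
    have h1 := hginv (pr r.1) r (hpr r.1) hr
    rw [hpr1 r.1, dist_self] at h1
    exact dist_eq_zero.1 h1.symm
  have hisom : ∀ x y, dist (g x) (g y) = dist x y := by
    intro x y
    have h1 := hginv (pr x) (pr y) (hpr x) (hpr y)
    rw [hpr1 x, hpr1 y] at h1
    exact h1.symm
  have hsurj : Function.Surjective g := by
    intro y
    obtain ⟨k, rfl⟩ := hu y
    obtain ⟨q, hq, hq2⟩ := S.chain_cover2 u P0 k
    exact ⟨q.1, by rw [hkey q ⟨2*k+2, hq⟩, hq2]⟩
  have hinj : Function.Injective g := by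
    intro x y hxy
    have h1 := hisom x y
    rw [hxy, dist_self] at h1
    exact dist_eq_zero.1 h1.symm
  refine ⟨IsometryEquiv.mk (Equiv.ofBijective g ⟨hinj, hsurj⟩) (Isometry.of_dist_eq hisom), ?_⟩
  intro x
  have hmem : ((x : Pt S), f' (x : Pt S)) ∈ chain S u P0 0 :=
    List.mem_map.2 ⟨(x : Pt S), hFlF _ x.2, rfl⟩
  have hgx := hkey ((x : Pt S), f' (x : Pt S)) ⟨0, hmem⟩
  rw [hf' _ x.2] at hgx
  exact hgx

/-- The space `Pt S` embeds every finite metric space with distances in `R`. -/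
theorem embed_finite (F : Type) [MetricSpace F] [Finite F] (hsub : distSet F ⊆ S.R) :
    ∃ f : F → Pt S, ∀ a b : F, dist (f a) (f b) = dist a b := by
  classical
  have : Fintype F := Fintype.ofFinite F
  have claim : ∀ l : List F, ∃ φ : F → Pt S,
      ∀ a ∈ l, ∀ b ∈ l, dist (φ a) (φ b) = dist a b := by
    intro l
    induction l with
    | nil => exact ⟨fun _ => S.cl 0, fun a ha => absurd ha List.not_mem_nil⟩
    | cons a l ih =>
      obtain ⟨φ, hφ⟩ := ih
      by_cases hal : a ∈ l
      · refine ⟨φ, ?_⟩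
        intro x hx y hy
        rw [List.mem_cons] at hx hy
        rcases hx with hx | hx <;> rcases hy with hy | hy
        · rw [hx, hy]; exact hφ a hal a hal
        · rw [hx]; exact hφ a hal y hy
        · rw [hy]; exact hφ x hx a hal
        · exact hφ x hx y hy
      by_cases hl : l = []
      · subst hl
        refine ⟨fun _ => S.cl 0, ?_⟩
        intro x hx y hy
        rw [List.mem_cons] at hx hy
        rcases hx with hx | hx
        · rcases hy with hy | hy
          · rw [hx, hy, dist_self, dist_self]
          · exact absurd hy List.not_mem_nil
        · exact absurd hx List.not_mem_nil
      obtain ⟨b0, hb0⟩ := List.exists_mem_of_ne_nil l hl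
      have hinjl : ∀ b ∈ l, ∀ b' ∈ l, φ b = φ b' → b = b' := by
        intro b hb b' hb' he
        have h1 := hφ b hb b' hb'
        rw [he, dist_self] at h1
        exact dist_eq_zero.1 h1.symm
      set G : Finset (Pt S) := (l.map φ).toFinset with hG
      have hGne : G.Nonempty := ⟨φ b0, List.mem_toFinset.2 (List.mem_map.2 ⟨b0, hb0, rfl⟩)⟩
      set t : Pt S → ℝ := fun x =>
        if h : ∃ b, b ∈ l ∧ φ b = x then dist a h.choose else 0 with htdef
      have ht : ∀ b ∈ l, t (φ b) = dist a b := by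
        intro b hb
        have hex : ∃ b', b' ∈ l ∧ φ b' = φ b := ⟨b, hb, rfl⟩
        obtain ⟨hb', he'⟩ := hex.choose_spec
        have : hex.choose = b := hinjl _ hb' _ hb he'
        rw [htdef]
        simp only []
        rw [dif_pos hex, this]
      have h1 : ∀ g ∈ G, t g ∈ S.R := by
        intro g hg
        obtain ⟨b, hb, rfl⟩ := List.mem_map.1 (List.mem_toFinset.1 hg)
        rw [ht b hb]
        exact hsub ⟨a, b, rfl⟩
      have h2 : ∀ g ∈ G, ∀ g' ∈ G, |t g - t g'| ≤ dist g g' ∧ dist g g' ≤ t g + t g' := by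
        intro g hg g' hg'
        obtain ⟨b, hb, rfl⟩ := List.mem_map.1 (List.mem_toFinset.1 hg)
        obtain ⟨b', hb', rfl⟩ := List.mem_map.1 (List.mem_toFinset.1 hg')
        rw [ht b hb, ht b' hb', hφ b hb b' hb']
        constructor
        · rw [dist_comm a b, dist_comm a b']
          exact abs_dist_sub_le _ _ _
        · rw [dist_comm a b]
          exact dist_triangle _ a _
      obtain ⟨p, hp⟩ := S.realize G hGne t h1 h2
      have hpb : ∀ b ∈ l, dist p (φ b) = dist a b := by
        intro b hb
        rw [hp (φ b) (List.mem_toFinset.2 (List.mem_map.2 ⟨b, hb, rfl⟩)), ht b hb]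
      refine ⟨Function.update φ a p, ?_⟩
      intro x hx y hy
      rw [List.mem_cons] at hx hy
      rcases hx with hx | hx <;> rcases hy with hy | hy
      · rw [hx, hy, dist_self, dist_self]
      · rw [hx, Function.update_self,
          Function.update_of_ne (fun h : y = a => hal (h ▸ hy)) _ _]
        exact hpb y hy
      · rw [hy, Function.update_self,
          Function.update_of_ne (fun h : x = a => hal (h ▸ hx)) _ _, dist_comm (φ x) p,
          dist_comm x a]
        exact hpb x hx
      · rw [Function.update_of_ne (fun h : x = a => hal (h ▸ hx)) _ _,
          Function.update_of_ne (fun h : y = a => hal (h ▸ hy)) _ _]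
        exact hφ x hx y hy
  obtain ⟨φ, hφ⟩ := claim Finset.univ.toList
  exact ⟨φ, fun a b => hφ a (Finset.mem_toList.2 (Finset.mem_univ a))
    b (Finset.mem_toList.2 (Finset.mem_univ b))⟩

end Setup
/-- For every countable `R ⊆ [0,∞)` with `0 ∈ R` satisfying the 4-values
condition there exists a countable universal metric space with distance set `R`. -/
theorem statement8 (R : Set ℝ) (hR : R ⊆ Set.Ici 0) (h0 : (0 : ℝ) ∈ R)
    (hcount : R.Countable) (h4 : FourValues R) :
    ∃ (X : Type) (inst : MetricSpace X),
      Countable X ∧ @IsUniversal X inst ∧ @distSet X inst = R := by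
  obtain ⟨e, he⟩ := hcount.exists_eq_range ⟨0, h0⟩
  have hmem : ∀ n, e n ∈ R := by
    intro n
    rw [he]
    exact Set.mem_range_self n
  have hmem' : ∀ r ∈ R, ∃ n, e n = r := by
    intro r hr
    rw [he] at hr
    exact hr
  set S : Setup := ⟨R, hR, h0, e, hmem, hmem', h4⟩ with hS
  refine ⟨Setup.Pt S, inferInstance, inferInstance, ⟨S.homogeneous, ?_⟩, ?_⟩
  · intro F _ _ hsub
    refine S.embed_finite F ?_
    rw [S.distSet_eq] at hsub
    exact hsub
  · rw [S.distSet_eq]
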